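/- Let E be a solvable evolution algebra with index of solvability n and suppose E^(m) (for some m < n) is an ideal of E. Then the quotient E/E^(m) is an evolution algebra with index of solvability exactly m, and its derived series satisfies (E/E^(m))^(l) = E^(l)/E^(m) for l = 1,...,m. -/

import Mathlib

open Submodule

variable {K : Type} [Field K] {E : Type} [AddCommGroup E] [Module K E]

/-- The product of two submodules under a bilinear multiplication. -/
def mulSet (μ : E →ₗ[K] E →ₗ[K] E) (U V : Submodule K E) : Submodule K E :=
  Submodule.span K {z | ∃ u ∈ U, ∃ v ∈ V, z = μ u v}

/-- Derived series starting from a submodule: `dser μ I 0 = I`,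
`dser μ I (k+1) = (dser μ I k)·(dser μ I k)`.  Thus `dser μ ⊤ (k-1) = E^(k)`. -/
def dser (μ : E →ₗ[K] E →ₗ[K] E) (I : Submodule K E) : ℕ → Submodule K E
  | 0 => I
  | k + 1 => mulSet μ (dser μ I k) (dser μ I k)

/-- Lower central-type series: `lowerPow μ k = E^(k+1)` where
`E^1 = E` and `E^(k+1) = Σ_{i=1}^k E^i E^(k+1-i)`. -/
def lowerPow (μ : E →ₗ[K] E →ₗ[K] E) : ℕ → Submodule K E
  | 0 => ⊤
  | k + 1 => ⨆ i : Fin (k + 1), mulSet μ (lowerPow μ i.1) (lowerPow μ (k - i.1))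
  decreasing_by
  · exact i.2
  · omega

/-- A submodule closed under the multiplication. -/
def IsSubalg (μ : E →ₗ[K] E →ₗ[K] E) (U : Submodule K E) : Prop :=
  ∀ x ∈ U, ∀ y ∈ U, μ x y ∈ U

/-- A (two-sided) ideal. -/
def IsIdeal (μ : E →ₗ[K] E →ₗ[K] E) (I : Submodule K E) : Prop :=
  ∀ x ∈ I, ∀ y : E, μ x y ∈ I ∧ μ y x ∈ I

/-- Subalgebra generated by a set. -/
def gen (μ : E →ₗ[K] E →ₗ[K] E) (s : Set E) : Submodule K E :=
  sInf {W | IsSubalg μ W ∧ s ⊆ W}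

/-- Quasi-ideal: the subalgebra generated together with any subalgebra is the vector-space sum. -/
def QuasiIdeal (μ : E →ₗ[K] E →ₗ[K] E) (U : Submodule K E) : Prop :=
  IsSubalg μ U ∧ ∀ V : Submodule K E, IsSubalg μ V → gen μ (↑U ∪ ↑V) = U ⊔ V

/-- The subalgebra lattice is modular. -/
def ModularLat (μ : E →ₗ[K] E →ₗ[K] E) : Prop :=
  ∀ U V W : Submodule K E, IsSubalg μ U → IsSubalg μ V → IsSubalg μ W → U ≤ W →
    gen μ (↑U ∪ ↑(V ⊓ W)) = gen μ (↑U ∪ ↑V) ⊓ W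

/-- The subalgebra lattice is distributive. -/
def DistribLat (μ : E →ₗ[K] E →ₗ[K] E) : Prop :=
  ∀ U V W : Submodule K E, IsSubalg μ U → IsSubalg μ V → IsSubalg μ W →
    gen μ (↑U ∪ ↑(V ⊓ W)) = gen μ (↑U ∪ ↑V) ⊓ gen μ (↑U ∪ ↑W)

/-- Supersolvable: a complete flag of ideals. -/
def Supersolvable (μ : E →ₗ[K] E →ₗ[K] E) : Prop :=
  ∃ I : ℕ → Submodule K E, (∀ i, IsIdeal μ (I i)) ∧ (∀ i, I i ≤ I (i + 1)) ∧
    (∀ i ≤ Module.finrank K E, Module.finrank K (I i) = i) ∧ I (Module.finrank K E) = ⊤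

/-- Maximal subalgebra `A` of the subalgebra `B`. -/
def MaxIn (μ : E →ₗ[K] E →ₗ[K] E) (A B : Submodule K E) : Prop :=
  A ≤ B ∧ A ≠ B ∧ ∀ W : Submodule K E, IsSubalg μ W → A ≤ W → W ≤ B → W = A ∨ W = B

lemma mulSet_mono (μ : E →ₗ[K] E →ₗ[K] E) {A A' B B' : Submodule K E}
    (hA : A ≤ A') (hB : B ≤ B') : mulSet μ A B ≤ mulSet μ A' B' := by
  apply Submodule.span_mono
  rintro z ⟨u, hu, v, hv, rfl⟩
  exact ⟨u, hA hu, v, hB hv, rfl⟩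

lemma dser_succ_le (μ : E →ₗ[K] E →ₗ[K] E) (k : ℕ) :
    dser μ ⊤ (k + 1) ≤ dser μ ⊤ k := by
  induction k with
  | zero => exact le_top
  | succ k ih => exact mulSet_mono μ ih ih

lemma dser_antitone (μ : E →ₗ[K] E →ₗ[K] E) : Antitone (dser μ ⊤) := by
  apply antitone_nat_of_succ_le
  exact dser_succ_le μ

lemma dser_stab (μ : E →ₗ[K] E →ₗ[K] E) {l : ℕ}
    (h : dser μ ⊤ (l + 1) = dser μ ⊤ l) :
    ∀ k, l ≤ k → dser μ ⊤ k = dser μ ⊤ l := by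
  intro k hk
  induction k with
  | zero =>
    have : l = 0 := Nat.le_zero.mp hk
    rw [this]
  | succ k ih =>
    rcases Nat.lt_or_ge l (k + 1) with h1 | h1
    · have hk' : l ≤ k := by omega
      have := ih hk'
      show mulSet μ (dser μ ⊤ k) (dser μ ⊤ k) = dser μ ⊤ l
      rw [this]; exact h
    · have : l = k + 1 := by omega
      rw [this]

lemma map_mulSet {F : Type} [AddCommGroup F] [Module K F]
    (μ : E →ₗ[K] E →ₗ[K] E) (ν : F →ₗ[K] F →ₗ[K] F) (f : E →ₗ[K] F)
    (hf : ∀ x y : E, ν (f x) (f y) = f (μ x y)) (A B : Submodule K E) :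
    Submodule.map f (mulSet μ A B) = mulSet ν (Submodule.map f A) (Submodule.map f B) := by
  unfold mulSet
  rw [Submodule.map_span]
  congr 1
  ext z
  constructor
  · rintro ⟨w, ⟨u, hu, v, hv, rfl⟩, rfl⟩
    exact ⟨f u, ⟨u, hu, rfl⟩, f v, ⟨v, hv, rfl⟩, (hf u v).symm⟩
  · rintro ⟨_, ⟨u, hu, rfl⟩, _, ⟨v, hv, rfl⟩, rfl⟩
    exact ⟨μ u v, ⟨u, hu, v, hv, rfl⟩, (hf u v).symm⟩

/-- if `E` is a solvable evolution algebra with index of solvability `n`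
and `E^(m)` (with `m < n`) is an ideal, then the quotient `E/E^(m)` (with the induced
multiplication `μ'`) is an evolution algebra with index of solvability exactly `m`,
and `(E/E^(m))^(l) = E^(l)/E^(m)` for `l = 1, …, m`.
(Here `dser μ ⊤ (k-1) = E^(k)`.) -/
theorem stmt11 {N n m : ℕ} (hm : 1 ≤ m) (hmn : m < n)
    (μ : E →ₗ[K] E →ₗ[K] E)
    (hcomm : ∀ x y : E, μ x y = μ y x)
    (b : Module.Basis (Fin N) K E)
    (hnat : ∀ i j : Fin N, i ≠ j → μ (b i) (b j) = 0)
    (hidx : dser μ ⊤ (n - 1) = ⊥ ∧ ∀ l : ℕ, l + 1 < n → dser μ ⊤ l ≠ ⊥)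
    (hI : IsIdeal μ (dser μ ⊤ (m - 1)))
    (μ' : (E ⧸ dser μ ⊤ (m - 1)) →ₗ[K] (E ⧸ dser μ ⊤ (m - 1)) →ₗ[K]
      (E ⧸ dser μ ⊤ (m - 1)))
    (hμ' : ∀ x y : E,
      μ' (Submodule.Quotient.mk x) (Submodule.Quotient.mk y) =
        Submodule.Quotient.mk (μ x y)) :
    (∃ (k : ℕ) (c : Module.Basis (Fin k) K (E ⧸ dser μ ⊤ (m - 1))),
      ∀ i j : Fin k, i ≠ j → μ' (c i) (c j) = 0) ∧
    (dser μ' ⊤ (m - 1) = ⊥ ∧ ∀ l : ℕ, l + 1 < m → dser μ' ⊤ l ≠ ⊥) ∧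
    (∀ l : ℕ, l + 1 ≤ m →
      dser μ' ⊤ l = Submodule.map (dser μ ⊤ (m - 1)).mkQ (dser μ ⊤ l)) := by
  have hf : ∀ x y : E, μ' ((dser μ ⊤ (m - 1)).mkQ x) ((dser μ ⊤ (m - 1)).mkQ y) = (dser μ ⊤ (m - 1)).mkQ (μ x y) := by
    intro x y
    simpa [Submodule.mkQ_apply] using hμ' x y
  have hmap : ∀ l : ℕ, dser μ' ⊤ l = Submodule.map (dser μ ⊤ (m - 1)).mkQ (dser μ ⊤ l) := by
    intro l
    induction l with
    | zero =>
      show (⊤ : Submodule K _) = Submodule.map (dser μ ⊤ (m - 1)).mkQ ⊤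
      rw [Submodule.map_top, Submodule.range_mkQ]
    | succ l ih =>
      show mulSet μ' (dser μ' ⊤ l) (dser μ' ⊤ l) = Submodule.map (dser μ ⊤ (m - 1)).mkQ
        (mulSet μ (dser μ ⊤ l) (dser μ ⊤ l))
      rw [ih, map_mulSet μ μ' (dser μ ⊤ (m - 1)).mkQ hf]
  have hbot : dser μ' ⊤ (m - 1) = ⊥ := by
    rw [hmap, Submodule.eq_bot_iff]
    rintro x ⟨y, hy, rfl⟩
    simpa [Submodule.mkQ_apply, Submodule.Quotient.mk_eq_zero] using hy
  refine ⟨?_, ⟨hbot, ?_⟩, fun l _ => hmap l⟩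
  · -- the quotient is an evolution algebra
    have hspan : Submodule.span K ((dser μ ⊤ (m - 1)).mkQ '' Set.range b) = ⊤ := by
      rw [← Submodule.map_span, b.span_eq, Submodule.map_top, Submodule.range_mkQ]
    obtain ⟨t, hts, htspan, hli⟩ := exists_linearIndependent K ((dser μ ⊤ (m - 1)).mkQ '' Set.range b)
    have htfin : t.Finite := Set.Finite.subset (Set.Finite.image _ (Set.finite_range b)) hts
    haveI : Fintype t := htfin.fintype
    let e : t ≃ Fin (Fintype.card t) := Fintype.equivFin t
    have htop : ⊤ ≤ Submodule.span K (Set.range ((↑) : t → E ⧸ dser μ ⊤ (m - 1))) := by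
      rw [Subtype.range_coe, htspan, hspan]
    let B : Module.Basis t K (E ⧸ dser μ ⊤ (m - 1)) := Module.Basis.mk hli htop
    refine ⟨Fintype.card t, B.reindex e, ?_⟩
    intro i j hij
    have hBi : ∀ i : Fin (Fintype.card t), (B.reindex e) i = ((e.symm i : t) : E ⧸ dser μ ⊤ (m - 1)) := by
      intro i
      rw [Module.Basis.reindex_apply, Module.Basis.mk_apply]
    obtain ⟨p, hp⟩ : ∃ p : Fin N, ((e.symm i : t) : E ⧸ dser μ ⊤ (m - 1)) = (dser μ ⊤ (m - 1)).mkQ (b p) := by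
      obtain ⟨_, ⟨p, rfl⟩, hv⟩ := hts (e.symm i).2
      exact ⟨p, hv.symm⟩
    obtain ⟨q, hq⟩ : ∃ q : Fin N, ((e.symm j : t) : E ⧸ dser μ ⊤ (m - 1)) = (dser μ ⊤ (m - 1)).mkQ (b q) := by
      obtain ⟨_, ⟨q, rfl⟩, hv⟩ := hts (e.symm j).2
      exact ⟨q, hv.symm⟩
    have hpq : p ≠ q := by
      rintro rfl
      have h' : (e.symm i : t) = e.symm j := Subtype.ext (hp.trans hq.symm)
      exact hij (by simpa using congrArg e h')
    rw [hBi i, hBi j, hp, hq, hf, hnat p q hpq, map_zero]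
  · -- index of solvability is exactly m
    intro l hlm hbotl
    have hle : dser μ ⊤ l ≤ dser μ ⊤ (m - 1) := by
      intro x hx
      have hx0 : (dser μ ⊤ (m - 1)).mkQ x ∈ (⊥ : Submodule K (E ⧸ dser μ ⊤ (m - 1))) := by
        rw [← hbotl, hmap]
        exact ⟨x, hx, rfl⟩
      simpa [Submodule.mkQ_apply, Submodule.Quotient.mk_eq_zero] using hx0
    have h1 : dser μ ⊤ (l + 1) = dser μ ⊤ l :=
      le_antisymm (dser_succ_le μ l)
        (hle.trans (dser_antitone μ (by omega : l + 1 ≤ m - 1)))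
    have h2 := dser_stab μ h1 (n - 1) (by omega)
    exact hidx.2 l (by omega) (by rw [← h2, hidx.1])
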